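/- Let P be a finite set, let d ≥ 1 and k ≥ 1 be natural numbers with k·d ≤ |P|, and let S ⊆ P. Let 𝒯 be the set of k-tuples (e₁, …, e_k) of pairwise disjoint d-element subsets of P, and let 𝒯' ⊆ 𝒯 be those tuples in which no component is contained in S, i.e., e_j ⊄ S for all j. Then |𝒯'| · C(|P|, d)^k ≤ (C(|P|, d) - C(|S|, d))^k · |𝒯|. -/

import Mathlib

open Finset

namespace UniformEdgesAux

variable {α : Type*} [DecidableEq α]

/-- ordered tuples of `j` pairwise disjoint `d`-subsets of `P`. -/
def Tup (P : Finset α) (d j : ℕ) : Finset (Fin j → Finset α) :=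
  (Fintype.piFinset fun _ => P.powerset).filter
    (fun f => (∀ i, (f i).card = d) ∧ ∀ i i', i ≠ i' → Disjoint (f i) (f i'))

/-- those tuples in which no edge is contained in `S`. -/
def Avd (P S : Finset α) (d j : ℕ) : Finset (Fin j → Finset α) :=
  (Tup P d j).filter (fun f => ∀ i, ¬ f i ⊆ S)

/-- the union of the edges of a tuple. -/
def un {j : ℕ} (g : Fin j → Finset α) : Finset α := univ.biUnion g

variable {P S : Finset α} {d : ℕ}

lemma mem_Tup {j : ℕ} {f : Fin j → Finset α} :
    f ∈ Tup P d j ↔ (∀ i, f i ⊆ P) ∧ (∀ i, (f i).card = d) ∧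
      ∀ i i', i ≠ i' → Disjoint (f i) (f i') := by
  simp [Tup, Fintype.mem_piFinset, and_assoc]

lemma mem_Avd {j : ℕ} {f : Fin j → Finset α} :
    f ∈ Avd P S d j ↔ f ∈ Tup P d j ∧ ∀ i, ¬ f i ⊆ S := by
  simp [Avd]

lemma un_subset {j : ℕ} {g : Fin j → Finset α} (hg : g ∈ Tup P d j) : un g ⊆ P :=
  biUnion_subset.2 fun i _ => ((mem_Tup.1 hg).1 i)

lemma edge_subset_un {j : ℕ} (g : Fin j → Finset α) (i : Fin j) : g i ⊆ un g :=
  subset_biUnion_of_mem g (mem_univ i)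

lemma card_un {j : ℕ} {g : Fin j → Finset α} (hg : g ∈ Tup P d j) :
    (un g).card = j * d := by
  obtain ⟨h1, h2, h3⟩ := mem_Tup.1 hg
  rw [un, card_biUnion fun i _ i' _ hii' => h3 i i' hii']
  simp [h2, mul_comm]

lemma init_mem_Tup {j : ℕ} {f : Fin (j+1) → Finset α} (hf : f ∈ Tup P d (j+1)) :
    Fin.init f ∈ Tup P d j := by
  obtain ⟨h1, h2, h3⟩ := mem_Tup.1 hf
  exact mem_Tup.2 ⟨fun i => h1 _, fun i => h2 _,
    fun i i' hii' => h3 _ _ (fun h => hii' (Fin.castSucc_injective _ h))⟩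

lemma last_mem_powersetCard {j : ℕ} {f : Fin (j+1) → Finset α} (hf : f ∈ Tup P d (j+1)) :
    f (Fin.last j) ∈ powersetCard d (P \ un (Fin.init f)) := by
  obtain ⟨h1, h2, h3⟩ := mem_Tup.1 hf
  rw [mem_powersetCard]
  refine ⟨subset_sdiff.2 ⟨h1 _, ?_⟩, h2 _⟩
  rw [un, disjoint_biUnion_right]
  intro i _
  exact h3 (Fin.last j) i.castSucc (Fin.ne_of_gt (Fin.castSucc_lt_last i))

lemma snoc_mem_Tup {j : ℕ} {g : Fin j → Finset α} {e : Finset α} (hg : g ∈ Tup P d j)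
    (he : e ∈ powersetCard d (P \ un g)) : Fin.snoc g e ∈ Tup P d (j+1) := by
  obtain ⟨h1, h2, h3⟩ := mem_Tup.1 hg
  rw [mem_powersetCard, subset_sdiff] at he
  obtain ⟨⟨heP, hedis⟩, hecard⟩ := he
  have hdis : ∀ i : Fin j, Disjoint e (g i) :=
    fun i => hedis.mono_right (edge_subset_un g i)
  refine mem_Tup.2 ⟨?_, ?_, ?_⟩
  · intro i
    refine Fin.lastCases ?_ ?_ i
    · rw [Fin.snoc_last]; exact heP
    · intro i'; rw [Fin.snoc_castSucc]; exact h1 i'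
  · intro i
    refine Fin.lastCases ?_ ?_ i
    · rw [Fin.snoc_last]; exact hecard
    · intro i'; rw [Fin.snoc_castSucc]; exact h2 i'
  · intro i i' hii'
    induction i using Fin.lastCases with
    | last =>
      induction i' using Fin.lastCases with
      | last => exact absurd rfl hii'
      | cast i' => rw [Fin.snoc_last, Fin.snoc_castSucc]; exact hdis i'
    | cast i =>
      induction i' using Fin.lastCases with
      | last => rw [Fin.snoc_last, Fin.snoc_castSucc]; exact (hdis i).symm
      | cast i' =>
        rw [Fin.snoc_castSucc, Fin.snoc_castSucc]
        exact h3 i i' (fun h => hii' (by rw [h]))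

lemma card_fiber_Tup {j : ℕ} {g : Fin j → Finset α} (hg : g ∈ Tup P d j) :
    ((Tup P d (j+1)).filter fun f => Fin.init f = g).card
      = (powersetCard d (P \ un g)).card := by
  refine Finset.card_bij' (fun f _ => f (Fin.last j)) (fun e _ => Fin.snoc g e) ?_ ?_ ?_ ?_
  · intro f hf
    obtain ⟨hf, hfin⟩ := mem_filter.1 hf
    have := last_mem_powersetCard hf
    rwa [hfin] at this
  · intro e he
    exact mem_filter.2 ⟨snoc_mem_Tup hg he, Fin.init_snoc _ _⟩
  · intro f hf
    obtain ⟨hf', hfin⟩ := mem_filter.1 hf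
    subst hfin
    exact Fin.snoc_init_self f
  · intro e he
    exact Fin.snoc_last _ _

lemma card_fiber_Avd {j : ℕ} {g : Fin j → Finset α} (hg : g ∈ Avd P S d j) :
    ((Avd P S d (j+1)).filter fun f => Fin.init f = g).card
      = ((powersetCard d (P \ un g)).filter fun e => ¬ e ⊆ S).card := by
  obtain ⟨hgT, hgS⟩ := mem_Avd.1 hg
  refine Finset.card_bij' (fun f _ => f (Fin.last j)) (fun e _ => Fin.snoc g e) ?_ ?_ ?_ ?_
  · intro f hf
    obtain ⟨hf, hfin⟩ := mem_filter.1 hf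
    obtain ⟨hfT, hfS⟩ := mem_Avd.1 hf
    refine mem_filter.2 ⟨?_, hfS _⟩
    have := last_mem_powersetCard hfT
    rwa [hfin] at this
  · intro e he
    obtain ⟨he, heS⟩ := mem_filter.1 he
    refine mem_filter.2 ⟨mem_Avd.2 ⟨snoc_mem_Tup hgT he, ?_⟩, Fin.init_snoc _ _⟩
    intro i
    refine Fin.lastCases ?_ ?_ i
    · simp only [Fin.snoc_last]
      exact heS
    · intro i'
      simp only [Fin.snoc_castSucc]
      exact hgS i'
  · intro f hf
    obtain ⟨hf', hfin⟩ := mem_filter.1 hf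
    subst hfin
    exact Fin.snoc_init_self f
  · intro e he
    exact Fin.snoc_last _ _

lemma card_sdiff_un {j : ℕ} {g : Fin j → Finset α} (hg : g ∈ Tup P d j) :
    (P \ un g).card = P.card - j * d := by
  rw [card_sdiff_of_subset (un_subset hg), card_un hg]

lemma card_Tup_succ (j : ℕ) :
    (Tup P d (j+1)).card = (P.card - j * d).choose d * (Tup P d j).card := by
  rw [card_eq_sum_card_fiberwise (fun f hf => init_mem_Tup hf)]
  rw [Finset.sum_congr rfl fun g hg => (card_fiber_Tup hg).trans
    (by rw [card_powersetCard, card_sdiff_un hg])]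
  rw [sum_const, smul_eq_mul, mul_comm]

lemma filter_powersetCard_subset (hS : S ⊆ P) {j : ℕ} (g : Fin j → Finset α) :
    (powersetCard d (P \ un g)).filter (fun e => e ⊆ S) = powersetCard d (S \ un g) := by
  ext e
  simp only [mem_filter, mem_powersetCard, subset_sdiff]
  constructor
  · rintro ⟨⟨⟨heP, hdis⟩, hcard⟩, heS⟩
    exact ⟨⟨heS, hdis⟩, hcard⟩
  · rintro ⟨⟨heS, hdis⟩, hcard⟩
    exact ⟨⟨⟨heS.trans hS, hdis⟩, hcard⟩, heS⟩

lemma card_Avd_succ (hS : S ⊆ P) (j : ℕ) :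
    (Avd P S d (j+1)).card
      = ∑ g ∈ Avd P S d j,
          ((P.card - j * d).choose d - ((S \ un g).card).choose d) := by
  rw [card_eq_sum_card_fiberwise
    (fun f hf => mem_Avd.2 ⟨init_mem_Tup (mem_Avd.1 hf).1, fun i => (mem_Avd.1 hf).2 _⟩)]
  refine Finset.sum_congr rfl fun g hg => ?_
  rw [card_fiber_Avd hg, filter_not, card_sdiff_of_subset (filter_subset _ _),
    filter_powersetCard_subset hS, card_powersetCard, card_powersetCard,
    card_sdiff_un (mem_Avd.1 hg).1]

end UniformEdgesAux

namespace UniformEdgesAux2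
open UniformEdgesAux

variable {α : Type*} [DecidableEq α] {P S : Finset α} {d : ℕ}

lemma image_eq_of_injOn {ψ : α → α} {v s t : Finset α} (hinj : Set.InjOn ψ ↑v)
    (hs : s ⊆ v) (ht : t ⊆ v) (h : s.image ψ = t.image ψ) : s = t := by
  ext a
  constructor
  · intro ha
    have : ψ a ∈ t.image ψ := h ▸ mem_image_of_mem ψ ha
    obtain ⟨b, hb, hba⟩ := mem_image.1 this
    rwa [← hinj (ht hb) (hs ha) hba]
  · intro ha
    have : ψ a ∈ s.image ψ := h.symm ▸ mem_image_of_mem ψ ha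
    obtain ⟨b, hb, hba⟩ := mem_image.1 this
    rwa [← hinj (hs hb) (ht ha) hba]

lemma card_fiber_mono {j : ℕ} {u v : Finset α} (hu : u ∈ powersetCard (j*d) P)
    (hv : v ∈ powersetCard (j*d) P) (hcS : (u ∩ S).card ≤ (v ∩ S).card) :
    ((Avd P S d j).filter fun g => un g = v).card
      ≤ ((Avd P S d j).filter fun g => un g = u).card := by
  rw [mem_powersetCard] at hu hv
  obtain ⟨huP, hucard⟩ := hu
  obtain ⟨hvP, hvcard⟩ := hv
  have hcards : u.card = v.card := by rw [hucard, hvcard]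
  have h1 := card_inter_add_card_sdiff v S
  have h2 := card_inter_add_card_sdiff u S
  have hvu : (v \ S).card ≤ (u \ S).card := by omega
  obtain ⟨w, hw, hwcard⟩ := exists_subset_card_eq hvu
  have hwu : w ⊆ u := hw.trans sdiff_subset
  have hwS : ∀ x ∈ w, x ∉ S := fun x hx => (mem_sdiff.1 (hw hx)).2
  have hcard2 : (v ∩ S).card = (u \ w).card := by
    rw [card_sdiff_of_subset hwu]; omega
  have e1 : (v \ S : Finset α) ≃ (w : Finset α) := Finset.equivOfCardEq hwcard.symm
  have e2 : (v ∩ S : Finset α) ≃ (u \ w : Finset α) := Finset.equivOfCardEq hcard2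
  set ψ : α → α := fun x =>
    if h : x ∈ v \ S then (e1 ⟨x, h⟩ : α)
    else if h2 : x ∈ v ∩ S then (e2 ⟨x, h2⟩ : α) else x with hψdef
  have hval1 : ∀ (x) (h : x ∈ v \ S), ψ x = (e1 ⟨x, h⟩ : α) := by
    intro x h; simp only [hψdef, dif_pos h]
  have hval2 : ∀ (x) (h : x ∈ v ∩ S), ψ x = (e2 ⟨x, h⟩ : α) := by
    intro x h
    have hns : x ∉ v \ S := fun hc => (mem_sdiff.1 hc).2 (mem_inter.1 h).2
    simp only [hψdef, dif_neg hns, dif_pos h]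
  have hmemw : ∀ x ∈ v, x ∉ S → ψ x ∈ w := by
    intro x hx hxS
    have h : x ∈ v \ S := mem_sdiff.2 ⟨hx, hxS⟩
    rw [hval1 x h]; exact (e1 ⟨x, h⟩).2
  have hmemu' : ∀ x ∈ v, x ∈ S → ψ x ∈ u \ w := by
    intro x hx hxS
    have h : x ∈ v ∩ S := mem_inter.2 ⟨hx, hxS⟩
    rw [hval2 x h]; exact (e2 ⟨x, h⟩).2
  have hψu : ∀ x ∈ v, ψ x ∈ u := by
    intro x hx
    by_cases hxS : x ∈ S
    · exact sdiff_subset (hmemu' x hx hxS)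
    · exact hwu (hmemw x hx hxS)
  have hψnS : ∀ x ∈ v, x ∉ S → ψ x ∉ S := fun x hx hxS => hwS _ (hmemw x hx hxS)
  have hinj : Set.InjOn ψ ↑v := by
    intro x hx y hy hxy
    rw [mem_coe] at hx hy
    by_cases hxS : x ∈ S <;> by_cases hyS : y ∈ S
    · have h1x : x ∈ v ∩ S := mem_inter.2 ⟨hx, hxS⟩
      have h1y : y ∈ v ∩ S := mem_inter.2 ⟨hy, hyS⟩
      rw [hval2 x h1x, hval2 y h1y] at hxy
      have := e2.injective (Subtype.coe_injective hxy)
      exact congrArg Subtype.val this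
    · exact absurd hxy.symm (by
        have h1 := hmemu' x hx hxS
        have h2 := hmemw y hy hyS
        intro hc; rw [hc] at h2
        exact (mem_sdiff.1 h1).2 h2)
    · exact absurd hxy (by
        have h1 := hmemu' y hy hyS
        have h2 := hmemw x hx hxS
        intro hc; rw [hc] at h2
        exact (mem_sdiff.1 h1).2 h2)
    · have h1x : x ∈ v \ S := mem_sdiff.2 ⟨hx, hxS⟩
      have h1y : y ∈ v \ S := mem_sdiff.2 ⟨hy, hyS⟩
      rw [hval1 x h1x, hval1 y h1y] at hxy
      have := e1.injective (Subtype.coe_injective hxy)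
      exact congrArg Subtype.val this
  have himg : v.image ψ = u := by
    apply eq_of_subset_of_card_le
    · exact image_subset_iff.2 fun x hx => hψu x hx
    · rw [card_image_of_injOn hinj, hcards]
  apply card_le_card_of_injOn (fun g i => (g i).image ψ)
  · intro g hg
    obtain ⟨hgA, hgv⟩ := mem_filter.1 hg
    obtain ⟨hgT, hgS⟩ := mem_Avd.1 hgA
    obtain ⟨hg1, hg2, hg3⟩ := mem_Tup.1 hgT
    have hgsub : ∀ i, g i ⊆ v := fun i => hgv ▸ edge_subset_un g i
    refine mem_filter.2 ⟨mem_Avd.2 ⟨mem_Tup.2 ⟨?_, ?_, ?_⟩, ?_⟩, ?_⟩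
    · intro i
      exact (image_subset_iff.2 fun x hx => hψu x (hgsub i hx)).trans huP
    · intro i
      rw [card_image_of_injOn (hinj.mono (coe_subset.2 (hgsub i))), hg2 i]
    · intro i i' hii'
      rw [disjoint_left]
      rintro a ha ha'
      obtain ⟨x, hx, rfl⟩ := mem_image.1 ha
      obtain ⟨y, hy, hyx⟩ := mem_image.1 ha'
      have hxy : y = x := hinj (hgsub i' hy) (hgsub i hx) hyx
      exact disjoint_left.1 (hg3 i i' hii') hx (hxy ▸ hy)
    · intro i hsub
      obtain ⟨x, hx, hxS⟩ := not_subset.1 (hgS i)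
      exact hψnS x (hgsub i hx) hxS (hsub (mem_image_of_mem ψ hx))
    · show un (fun i => (g i).image ψ) = u
      rw [un, ← biUnion_image]
      show (un g).image ψ = u
      rw [hgv, himg]
  · intro g hg h hh heq
    rw [mem_coe, mem_filter] at hg hh
    obtain ⟨hgA, hgv⟩ := hg
    obtain ⟨hhA, hhv⟩ := hh
    funext i
    have hgsub : ∀ i, g i ⊆ v := fun i => hgv ▸ edge_subset_un g i
    have hhsub : ∀ i, h i ⊆ v := fun i => hhv ▸ edge_subset_un h i
    exact image_eq_of_injOn hinj (hgsub i) (hhsub i) (congrFun heq i)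

end UniformEdgesAux2

namespace UniformEdgesAux2
open UniformEdgesAux

variable {α : Type*} [DecidableEq α] {P S : Finset α} {d : ℕ}

lemma choose_id (n d m : ℕ) :
    n.choose d * (n - d).choose m = n.choose m * (n - m).choose d := by
  by_cases h : d + m ≤ n
  · have h1 := Nat.choose_mul (n := n) (k := d + m) (s := d) (Nat.le_add_right d m)
    have h2 := Nat.choose_mul (n := n) (k := d + m) (s := m) (Nat.le_add_left m d)
    rw [Nat.add_sub_cancel_left] at h1
    rw [Nat.add_sub_cancel] at h2
    have hsym : (d + m).choose d = (d + m).choose m := by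
      have h3 := Nat.choose_symm (n := d + m) (k := d) (Nat.le_add_right d m)
      rw [Nat.add_sub_cancel_left] at h3
      exact h3.symm
    rw [← h1, ← h2, hsym]
  · by_cases hd : n < d
    · rw [Nat.choose_eq_zero_of_lt hd,
        Nat.choose_eq_zero_of_lt (lt_of_le_of_lt (Nat.sub_le n m) hd), zero_mul, mul_zero]
    · by_cases hm : n < m
      · rw [Nat.choose_eq_zero_of_lt hm,
          Nat.choose_eq_zero_of_lt (lt_of_le_of_lt (Nat.sub_le n d) hm), zero_mul, mul_zero]
      · rw [Nat.choose_eq_zero_of_lt (by omega : n - d < m),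
          Nat.choose_eq_zero_of_lt (by omega : n - m < d), mul_zero, mul_zero]

lemma sum_phi (hS : S ⊆ P) (m : ℕ) :
    ∑ u ∈ powersetCard m P, ((S \ u).card).choose d
      = S.card.choose d * (P.card - d).choose m := by
  have step1 : ∀ u : Finset α, ((S \ u).card).choose d
      = ((powersetCard d S).filter fun e => Disjoint e u).card := by
    intro u
    rw [← card_powersetCard]
    congr 1
    ext e
    simp only [mem_powersetCard, mem_filter, subset_sdiff]
    tauto
  calc ∑ u ∈ powersetCard m P, ((S \ u).card).choose d
      = ∑ u ∈ powersetCard m P, ∑ e ∈ powersetCard d S,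
          (if Disjoint e u then 1 else 0) := by
        refine sum_congr rfl fun u _ => ?_
        rw [step1, card_filter]
    _ = ∑ e ∈ powersetCard d S, ∑ u ∈ powersetCard m P,
          (if Disjoint e u then 1 else 0) := Finset.sum_comm
    _ = ∑ e ∈ powersetCard d S, (P.card - d).choose m := by
        refine sum_congr rfl fun e he => ?_
        rw [mem_powersetCard] at he
        rw [← card_filter]
        have hfe : (powersetCard m P).filter (fun u => Disjoint e u)
            = powersetCard m (P \ e) := by
          ext u
          simp only [mem_filter, mem_powersetCard, subset_sdiff]
          constructor
          · rintro ⟨⟨h1, h2⟩, h3⟩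
            exact ⟨⟨h1, h3.symm⟩, h2⟩
          · rintro ⟨⟨h1, h3⟩, h2⟩
            exact ⟨⟨h1, h2⟩, h3.symm⟩
        rw [hfe, card_powersetCard, card_sdiff_of_subset (he.1.trans hS), he.2]
    _ = S.card.choose d * (P.card - d).choose m := by
        rw [sum_const, smul_eq_mul, card_powersetCard]

lemma star (hS : S ⊆ P) (j : ℕ) :
    S.card.choose d * ((P.card - j * d).choose d * (Avd P S d j).card)
      ≤ P.card.choose d * ∑ g ∈ Avd P S d j, ((S \ un g).card).choose d := by
  rcases (Avd P S d j).eq_empty_or_nonempty with hA | ⟨g0, hg0⟩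
  · simp [hA]
  have hg0T := (mem_Avd.1 hg0).1
  have hm : j * d ≤ P.card := by
    have h := card_le_card (un_subset hg0T)
    rwa [card_un hg0T] at h
  set n := P.card with hn
  set C := n.choose d with hC
  set Cs := S.card.choose d with hCs
  set m := j * d with hmdef
  set U := powersetCard m P with hU
  set Bf : Finset α → ℕ := fun u => ((Avd P S d j).filter fun g => un g = u).card with hBf
  set φf : Finset α → ℕ := fun u => ((S \ u).card).choose d with hφf
  have hmaps : ∀ g ∈ Avd P S d j, un g ∈ U := fun g hg =>
    mem_powersetCard.2 ⟨un_subset (mem_Avd.1 hg).1, card_un (mem_Avd.1 hg).1⟩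
  have hW : (Avd P S d j).card = ∑ u ∈ U, Bf u := card_eq_sum_card_fiberwise hmaps
  have hΦ : ∑ g ∈ Avd P S d j, ((S \ un g).card).choose d = ∑ u ∈ U, φf u * Bf u := by
    rw [← sum_fiberwise_of_maps_to' hmaps (fun u => φf u)]
    refine sum_congr rfl fun u _ => ?_
    rw [sum_const, smul_eq_mul, mul_comm]
  have hmono : MonovaryOn φf Bf ↑U := by
    intro u hu v hv hBuv
    rw [mem_coe] at hu hv
    have hvu : (v ∩ S).card ≤ (u ∩ S).card := by
      by_contra hc
      push_neg at hc
      have h4 : Bf v ≤ Bf u := card_fiber_mono hu hv (le_of_lt hc)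
      omega
    have hsd : (S \ u).card ≤ (S \ v).card := by
      have h1 := card_inter_add_card_sdiff S u
      have h2 := card_inter_add_card_sdiff S v
      rw [inter_comm] at h1 h2
      omega
    exact Nat.choose_le_choose d hsd
  have hcheb := hmono.sum_mul_sum_le_card_mul_sum
  have hUcard : U.card = n.choose m := card_powersetCard m P
  have hsumφ : ∑ u ∈ U, φf u = Cs * (n - d).choose m := sum_phi hS m
  have hid : C * (n - d).choose m = n.choose m * (n - m).choose d := choose_id n d m
  have hpos : 0 < n.choose m := Nat.choose_pos hm
  have key : n.choose m * (Cs * ((n - m).choose d * (Avd P S d j).card))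
      ≤ n.choose m * (C * ∑ g ∈ Avd P S d j, ((S \ un g).card).choose d) := by
    calc n.choose m * (Cs * ((n - m).choose d * (Avd P S d j).card))
        = (Cs * (n.choose m * (n - m).choose d)) * (Avd P S d j).card := by ring
      _ = (Cs * (C * (n - d).choose m)) * (Avd P S d j).card := by rw [hid]
      _ = C * ((Cs * (n - d).choose m) * (Avd P S d j).card) := by ring
      _ = C * ((∑ u ∈ U, φf u) * (∑ u ∈ U, Bf u)) := by rw [hsumφ, hW]
      _ ≤ C * (U.card * ∑ u ∈ U, φf u * Bf u) := Nat.mul_le_mul_left C hcheb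
      _ = n.choose m * (C * ∑ g ∈ Avd P S d j, ((S \ un g).card).choose d) := by
          rw [hUcard, hΦ]; ring
  exact Nat.le_of_mul_le_mul_left key hpos

end UniformEdgesAux2

namespace UniformEdgesAux2
open UniformEdgesAux

variable {α : Type*} [DecidableEq α] {P S : Finset α} {d : ℕ}

lemma step (hS : S ⊆ P) (j : ℕ) :
    (Avd P S d (j+1)).card * P.card.choose d
      ≤ (P.card.choose d - S.card.choose d)
          * ((P.card - j * d).choose d * (Avd P S d j).card) := by
  set n := P.card with hn
  set C := n.choose d with hC
  set Cs := S.card.choose d with hCs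
  set D := (n - j * d).choose d with hD
  set W := (Avd P S d j).card with hW
  set Φ := ∑ g ∈ Avd P S d j, ((S \ un g).card).choose d with hΦ
  have hCsC : Cs ≤ C := Nat.choose_le_choose d (card_le_card hS)
  have hag : ∀ g ∈ Avd P S d j, ((S \ un g).card).choose d ≤ D := by
    intro g hg
    apply Nat.choose_le_choose
    have hgT := (mem_Avd.1 hg).1
    have h := card_le_card (sdiff_subset_sdiff hS (Finset.Subset.refl (un g)))
    rwa [card_sdiff_un hgT] at h
  have h1 : (Avd P S d (j+1)).card + Φ = D * W := by
    rw [hΦ, card_Avd_succ hS j, ← sum_add_distrib,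
      sum_congr rfl fun g hg => Nat.sub_add_cancel (hag g hg),
      sum_const, smul_eq_mul, mul_comm]
  have h2 : Cs * (D * W) ≤ C * Φ := star hS j
  have h3 : (Avd P S d (j+1)).card * C + Cs * (D * W) ≤ C * (D * W) := by
    calc (Avd P S d (j+1)).card * C + Cs * (D * W)
        ≤ (Avd P S d (j+1)).card * C + C * Φ := Nat.add_le_add_left h2 _
      _ = ((Avd P S d (j+1)).card + Φ) * C := by ring
      _ = C * (D * W) := by rw [h1]; ring
  have h5 : (C - Cs) * (D * W) = C * (D * W) - Cs * (D * W) := Nat.sub_mul C Cs (D * W)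
  rw [h5]
  exact Nat.le_sub_of_add_le h3

lemma main_count (hS : S ⊆ P) : ∀ j : ℕ,
    (Avd P S d j).card * (P.card.choose d) ^ j
      ≤ (P.card.choose d - S.card.choose d) ^ j * (Tup P d j).card := by
  intro j
  induction j with
  | zero => simpa using (card_le_card (filter_subset _ (Tup P d 0)) : (Avd P S d 0).card ≤ (Tup P d 0).card)
  | succ j ih =>
    set n := P.card with hn
    set C := n.choose d with hC
    set Cs := S.card.choose d with hCs
    set D := (n - j * d).choose d with hD
    calc (Avd P S d (j+1)).card * C ^ (j+1)
        = ((Avd P S d (j+1)).card * C) * C ^ j := by ring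
      _ ≤ ((C - Cs) * (D * (Avd P S d j).card)) * C ^ j :=
          Nat.mul_le_mul_right _ (step hS j)
      _ = (C - Cs) * D * ((Avd P S d j).card * C ^ j) := by ring
      _ ≤ (C - Cs) * D * ((C - Cs) ^ j * (Tup P d j).card) :=
          Nat.mul_le_mul_left _ ih
      _ = (C - Cs) ^ (j+1) * (D * (Tup P d j).card) := by ring
      _ = (C - Cs) ^ (j+1) * (Tup P d (j+1)).card := by rw [← card_Tup_succ]

end UniformEdgesAux2

theorem uniform_edges_count {α : Type*} [DecidableEq α]
    (P : Finset α) (d k : ℕ) (hd : 1 ≤ d) (hk : 1 ≤ k) (hkd : k * d ≤ P.card)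
    (S : Finset α) (hS : S ⊆ P)
    (T T' : Set (Fin k → Finset α))
    (hT : T = {f | (∀ j, f j ⊆ P ∧ (f j).card = d) ∧
      ∀ i j, i ≠ j → Disjoint (f i) (f j)})
    (hT' : T' = {f ∈ T | ∀ j, ¬ f j ⊆ S}) :
    T'.ncard * (P.card.choose d) ^ k ≤
      (P.card.choose d - S.card.choose d) ^ k * T.ncard := by
  have hTeq : T = ↑(UniformEdgesAux.Tup P d k) := by
    rw [hT]
    ext f
    simp only [Set.mem_setOf_eq, Finset.mem_coe, UniformEdgesAux.mem_Tup]
    exact ⟨fun ⟨h1, h2⟩ => ⟨fun i => (h1 i).1, fun i => (h1 i).2, h2⟩,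
      fun ⟨h1, h2, h3⟩ => ⟨fun i => ⟨h1 i, h2 i⟩, h3⟩⟩
  have hT'eq : T' = ↑(UniformEdgesAux.Avd P S d k) := by
    rw [hT', hTeq]
    ext f
    simp only [Set.mem_setOf_eq, Finset.mem_coe, UniformEdgesAux.mem_Avd]
  rw [hTeq, hT'eq, Set.ncard_coe_finset, Set.ncard_coe_finset]
  exact UniformEdgesAux2.main_count hS k
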